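/- Let F : ℝ → ℝ be of class C² with F(t) > F(0) = 0 for all t ≠ 0, liminf_{|t|→∞} F(t)/t² > 0, and F''(0) = 0. Let φ be as in the context (so φ is continuous and strictly increasing with φ(0)=0). Then there exists q₀ > 0 such that for every q ∈ (0, q₀], every T > 0, and every C² function u : [0,T] → ℝ with u'(0) = u'(T) = 0 satisfying J_q(u) ≤ 0, one has ∫₀ᵀ |u'(x)|² dx ≤ q·T·φ⁻¹(q²/2) and Osc(u)² ≤ q·T²·φ⁻¹(q²/2), where φ⁻¹ denotes the inverse of the restriction of φ to [0,∞). -/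

import Mathlib

open Filter Real intervalIntegral
open MeasureTheory

/-- The convex envelope of `G`: the pointwise supremum of all convex functions lying below
`G`. -/
noncomputable def convexEnvelope (G : ℝ → ℝ) : ℝ → ℝ :=
  fun x => sSup {v : ℝ | ∃ g : ℝ → ℝ,
    ConvexOn ℝ Set.univ g ∧ (∀ y, g y ≤ G y) ∧ g x = v}

/-- `F̃(t) := min {F(t), F(−t)}`. -/
noncomputable def Ftilde (F : ℝ → ℝ) : ℝ → ℝ := fun t => min (F t) (F (-t))

/-- `H := (F̃(√|·|))*`, the convex envelope of `t ↦ F̃(√|t|)`. -/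
noncomputable def Hfun (F : ℝ → ℝ) : ℝ → ℝ :=
  convexEnvelope (fun t => Ftilde F (Real.sqrt |t|))

/-- `φ(t) := H(t)/t` for `t ≠ 0` and `φ(0) := 0`. -/
noncomputable def phiFun (F : ℝ → ℝ) : ℝ → ℝ :=
  fun t => if t = 0 then 0 else Hfun F t / t

/-- The oscillation of `u` on `[0,T]`: `sup u − inf u`. -/
noncomputable def oscOn (u : ℝ → ℝ) (T : ℝ) : ℝ :=
  sSup (u '' Set.Icc 0 T) - sInf (u '' Set.Icc 0 T)

section EnvBasics
variable {G : ℝ → ℝ}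

lemma env_mem_zero (hG : ∀ y, 0 ≤ G y) (x : ℝ) : (0:ℝ) ∈ {v : ℝ | ∃ g : ℝ → ℝ,
    ConvexOn ℝ Set.univ g ∧ (∀ y, g y ≤ G y) ∧ g x = v} :=
  ⟨fun _ => 0, convexOn_const 0 convex_univ, fun y => hG y, rfl⟩

lemma env_bdd (x : ℝ) : BddAbove {v : ℝ | ∃ g : ℝ → ℝ,
    ConvexOn ℝ Set.univ g ∧ (∀ y, g y ≤ G y) ∧ g x = v} :=
  ⟨G x, by rintro v ⟨g, _, hle, rfl⟩; exact hle x⟩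

lemma env_nonneg (hG : ∀ y, 0 ≤ G y) (x : ℝ) : 0 ≤ convexEnvelope G x :=
  le_csSup (env_bdd x) (env_mem_zero hG x)

lemma env_le (hG : ∀ y, 0 ≤ G y) (x : ℝ) : convexEnvelope G x ≤ G x :=
  csSup_le ⟨0, env_mem_zero hG x⟩ (by rintro v ⟨g, _, hle, rfl⟩; exact hle x)

lemma le_env {g : ℝ → ℝ} (hg : ConvexOn ℝ Set.univ g) (hle : ∀ y, g y ≤ G y) (x : ℝ) :
    g x ≤ convexEnvelope G x :=
  le_csSup (env_bdd x) ⟨g, hg, hle, rfl⟩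

lemma env_convexOn (hG : ∀ y, 0 ≤ G y) : ConvexOn ℝ Set.univ (convexEnvelope G) := by
  refine ⟨convex_univ, fun x _ y _ a b ha hb hab => ?_⟩
  refine csSup_le ⟨0, env_mem_zero hG _⟩ ?_
  rintro v ⟨g, hgc, hle, rfl⟩
  calc g (a • x + b • y) ≤ a * g x + b * g y := hgc.2 (Set.mem_univ x) (Set.mem_univ y) ha hb hab
    _ ≤ a * convexEnvelope G x + b * convexEnvelope G y := by
        gcongr <;> [skip; skip] <;> exact le_env hgc hle _

lemma env_continuous (hG : ∀ y, 0 ≤ G y) : Continuous (convexEnvelope G) := by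
  have h := (env_convexOn hG).continuousOn (C := (Set.univ : Set ℝ)) isOpen_univ
  rw [← continuousOn_univ]; exact h
end EnvBasics

lemma intCS {a b : ℝ} (hab : a ≤ b) {f g : ℝ → ℝ} (hf : Continuous f) (hg : Continuous g) :
    (∫ x in a..b, f x * g x) ^ 2 ≤ (∫ x in a..b, f x ^ 2) * (∫ x in a..b, g x ^ 2) := by
  set A := ∫ x in a..b, f x ^ 2 with hA
  set B := ∫ x in a..b, f x * g x with hB
  set C := ∫ x in a..b, g x ^ 2 with hC
  have key : ∀ L : ℝ, 0 ≤ A * (L * L) + (2 * B) * L + C := by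
    intro L
    have hnn : 0 ≤ ∫ x in a..b, (L * f x + g x) ^ 2 :=
      intervalIntegral.integral_nonneg hab (fun x _ => sq_nonneg _)
    have heq : (∫ x in a..b, (L * f x + g x) ^ 2)
        = A * (L * L) + (2 * B) * L + C := by
      have hpt : ∀ x : ℝ, (L * f x + g x) ^ 2
          = (L * L) * f x ^ 2 + (2 * L) * (f x * g x) + g x ^ 2 := by intro x; ring
      simp_rw [hpt]
      rw [intervalIntegral.integral_add, intervalIntegral.integral_add,
        intervalIntegral.integral_const_mul, intervalIntegral.integral_const_mul]
      · ring
      · exact ((continuous_const.mul (hf.pow 2))).intervalIntegrable a b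
      · exact (continuous_const.mul (hf.mul hg)).intervalIntegrable a b
      · exact (((continuous_const.mul (hf.pow 2))).add
          (continuous_const.mul (hf.mul hg))).intervalIntegrable a b
      · exact (hg.pow 2).intervalIntegrable a b
    linarith [heq ▸ hnn]
  have hd := discrim_le_zero key
  rw [discrim] at hd
  nlinarith [hd]

lemma convexOn_linabs (c C : ℝ) (hc : 0 ≤ c) :
    ConvexOn ℝ Set.univ (fun t => c * |t| - C) := by
  refine ⟨convex_univ, fun x _ y _ a b ha hb hab => ?_⟩
  simp only [smul_eq_mul]
  have h1 : |a * x + b * y| ≤ a * |x| + b * |y| :=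
    (abs_add_le _ _).trans (by
      rw [abs_mul, abs_mul, abs_of_nonneg ha, abs_of_nonneg hb])
  have h2 : c * |a * x + b * y| ≤ c * (a * |x| + b * |y|) :=
    mul_le_mul_of_nonneg_left h1 hc
  have h3 : a * C + b * C = C := by rw [← add_mul, hab, one_mul]
  linarith [h2]

lemma liminf_extract (F : ℝ → ℝ)
    (hliminf : 0 < Filter.liminf (fun t : ℝ => F t / t ^ 2) (Filter.atBot ⊔ Filter.atTop)) :
    ∃ c > (0:ℝ), ∃ R ≥ (1:ℝ), ∀ τ : ℝ, R ≤ τ → c * τ ^ 2 ≤ F τ ∧ c * τ ^ 2 ≤ F (-τ) := by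
  set S := {a : ℝ | ∀ᶠ t in (Filter.atBot ⊔ Filter.atTop), a ≤ F t / t ^ 2} with hS
  have hlim : Filter.liminf (fun t : ℝ => F t / t ^ 2) (Filter.atBot ⊔ Filter.atTop) = sSup S :=
    Filter.liminf_eq
  rw [hlim] at hliminf
  have hSne : S.Nonempty := by
    by_contra h
    rw [Set.not_nonempty_iff_eq_empty] at h
    rw [h, Real.sSup_empty] at hliminf; linarith
  have hSbdd : BddAbove S := by
    by_contra h
    rw [Real.sSup_of_not_bddAbove h] at hliminf; linarith
  obtain ⟨c, hcS, hc0⟩ := exists_lt_of_lt_csSup hSne hliminf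
  rw [hS, Set.mem_setOf_eq, Filter.eventually_sup] at hcS
  obtain ⟨hbot, htop⟩ := hcS
  rw [Filter.eventually_atBot] at hbot
  rw [Filter.eventually_atTop] at htop
  obtain ⟨R₂, hR₂⟩ := hbot
  obtain ⟨R₁, hR₁⟩ := htop
  refine ⟨c, hc0, max R₁ (max (-R₂) 1), le_max_of_le_right (le_max_right _ _), ?_⟩
  intro τ hτ
  have hτ1 : (1:ℝ) ≤ τ := le_trans (le_max_of_le_right (le_max_right _ _)) hτ
  have hτsq : (0:ℝ) < τ ^ 2 := by positivity
  constructor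
  · have h1 : c ≤ F τ / τ ^ 2 := hR₁ τ (le_trans (le_max_left _ _) hτ)
    rw [le_div_iff₀ hτsq] at h1; linarith
  · have h2 : c ≤ F (-τ) / (-τ) ^ 2 := hR₂ (-τ) (by
      have : -R₂ ≤ τ := le_trans (le_max_of_le_right (le_max_left _ _)) hτ
      linarith)
    have hnp : (-τ) ^ 2 = τ ^ 2 := by ring
    rw [hnp, le_div_iff₀ hτsq] at h2
    linarith

lemma small_t (F : ℝ → ℝ) (hF : ContDiff ℝ 2 F) (hF0 : F 0 = 0)
    (hargmin : ∀ t : ℝ, t ≠ 0 → F 0 < F t) (hF'' : iteratedDeriv 2 F 0 = 0) :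
    ∀ ε : ℝ, 0 < ε → ∃ τ : ℝ, 0 < τ ∧ F τ ≤ ε * τ ^ 2 := by
  intro ε hε
  have hmin : IsLocalMin F 0 := Filter.Eventually.of_forall (fun t => by
    rcases eq_or_ne t 0 with rfl | h
    · exact le_rfl
    · exact (hargmin t h).le)
  have hd0 : deriv F 0 = 0 := hmin.deriv_eq_zero
  have hF2 : ContDiff ℝ (1 + 1) F := by
    have : ((2:ℕ) : WithTop ℕ∞) = 1 + 1 := by norm_num
    exact this ▸ hF
  have hF' : ContDiff ℝ 1 (deriv F) := (contDiff_succ_iff_deriv.1 hF2).2.2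
  have hdd : Differentiable ℝ (deriv F) := hF'.differentiable (by norm_num)
  have h2eq : iteratedDeriv 2 F = deriv (deriv F) := by
    rw [show (2:ℕ) = 1 + 1 from rfl, iteratedDeriv_succ, iteratedDeriv_one]
  have hF''0 : deriv (deriv F) 0 = 0 := by rw [← h2eq]; exact hF''
  have hslope : HasDerivAt (deriv F) 0 0 := by
    have := (hdd 0).hasDerivAt
    rwa [hF''0] at this
  have htend : Filter.Tendsto (slope (deriv F) 0) (nhdsWithin 0 {0}ᶜ) (nhds 0) :=
    hasDerivAt_iff_tendsto_slope.1 hslope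
  rw [Metric.tendsto_nhdsWithin_nhds] at htend
  obtain ⟨δ, hδ0, hδ⟩ := htend (ε / 2) (by positivity)
  set τ := δ / 2 with hτdef
  have hτ0 : 0 < τ := by positivity
  refine ⟨τ, hτ0, ?_⟩
  have hFcont : ContinuousOn F (Set.Icc 0 τ) := hF.continuous.continuousOn
  have hFd : ∀ x ∈ Set.Ioo (0:ℝ) τ, HasDerivAt F (deriv F x) x := fun x _ =>
    ((hF.differentiable (by norm_num)) x).hasDerivAt
  obtain ⟨ξ, hξ, hξeq⟩ := exists_hasDerivAt_eq_slope F (deriv F) hτ0 hFcont hFd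
  have hξmem : ξ ∈ ({0}ᶜ : Set ℝ) := by
    simp only [Set.mem_compl_iff, Set.mem_singleton_iff]
    exact ne_of_gt hξ.1
  have hξdist : dist ξ 0 < δ := by
    rw [Real.dist_eq, sub_zero, abs_of_pos hξ.1]
    linarith [hξ.2]
  have hsl := hδ hξmem hξdist
  rw [Real.dist_eq, sub_zero] at hsl
  have hslval : slope (deriv F) 0 ξ = deriv F ξ / ξ := by
    rw [slope_def_field]; rw [hd0]; ring_nf
  rw [hslval] at hsl
  have hder_bound : deriv F ξ ≤ (ε / 2) * ξ := by
    have := (abs_lt.1 hsl).2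
    rw [div_lt_iff₀ hξ.1] at this
    linarith
  have hFτ : F τ = deriv F ξ * τ := by
    rw [hξeq, hF0, sub_zero, sub_zero]
    field_simp
  rw [hFτ]
  have : deriv F ξ * τ ≤ (ε / 2) * ξ * τ :=
    mul_le_mul_of_nonneg_right hder_bound hτ0.le
  have hξτ : ξ ≤ τ := hξ.2.le
  have h7 : ε / 2 * ξ * τ ≤ ε / 2 * τ * τ := by
    have := mul_le_mul_of_nonneg_right hξτ (by positivity : (0:ℝ) ≤ ε / 2 * τ)
    nlinarith [this]
  nlinarith [hτ0]
set_option maxHeartbeats 1000000 in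
lemma keyEstimate (F H : ℝ → ℝ) (q T s : ℝ) (hq : 0 < q) (hT : 0 < T) (hs : 0 ≤ s)
    (hHconv : ConvexOn ℝ Set.univ H) (hHcont : Continuous H)
    (hHnonneg : ∀ t, 0 ≤ H t) (hHF : ∀ t : ℝ, H (t ^ 2) ≤ F t)
    (hFnonneg : ∀ t, 0 ≤ F t) (hFcont : Continuous F)
    (hs2 : ∀ t : ℝ, 0 < t → H t / t ≤ q ^ 2 / 2 → t ≤ s)
    (u : ℝ → ℝ) (hu : ContDiff ℝ 2 u) (hu0 : deriv u 0 = 0) (huT : deriv u T = 0)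
    (hJ : (∫ x in (0:ℝ)..T,
        ((iteratedDeriv 2 u x) ^ 2 / 2 - q * (deriv u x) ^ 2 / 2 + F (u x))) ≤ 0) :
    (∫ x in (0:ℝ)..T, (deriv u x) ^ 2) ≤ q * T * s ∧
      (oscOn u T) ^ 2 ≤ q * T ^ 2 * s := by
  have hT0 : (0:ℝ) ≤ T := hT.le
  -- continuity facts
  have hu_cont : Continuous u := hu.continuous
  have hu_diff : Differentiable ℝ u := hu.differentiable (by norm_num)
  have hd1_cont : Continuous (deriv u) := by
    have := hu.continuous_iteratedDeriv 1 (by norm_num)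
    rwa [iteratedDeriv_one] at this
  have hd1_diff : Differentiable ℝ (deriv u) := by
    have := hu.differentiable_iteratedDeriv 1 (by norm_num)
    rwa [iteratedDeriv_one] at this
  have hd2_cont : Continuous (iteratedDeriv 2 u) := hu.continuous_iteratedDeriv 2 (by norm_num)
  have h2eq : iteratedDeriv 2 u = deriv (deriv u) := by
    rw [show (2:ℕ) = 1 + 1 from rfl, iteratedDeriv_succ, iteratedDeriv_one]
  set A := ∫ x in (0:ℝ)..T, (deriv u x) ^ 2 with hAdef
  set B := ∫ x in (0:ℝ)..T, (iteratedDeriv 2 u x) ^ 2 with hBdef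
  set C2 := ∫ x in (0:ℝ)..T, (u x) ^ 2 with hCdef
  set Fint := ∫ x in (0:ℝ)..T, F (u x) with hFdef
  have hA0 : 0 ≤ A := intervalIntegral.integral_nonneg hT0 (fun x _ => sq_nonneg _)
  have hB0 : 0 ≤ B := intervalIntegral.integral_nonneg hT0 (fun x _ => sq_nonneg _)
  have hC0 : 0 ≤ C2 := intervalIntegral.integral_nonneg hT0 (fun x _ => sq_nonneg _)
  have hFint0 : 0 ≤ Fint := intervalIntegral.integral_nonneg hT0 (fun x _ => hFnonneg _)
  -- energy inequality split
  have hEnergy : B / 2 - q * A / 2 + Fint ≤ 0 := by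
    have h1 : (∫ x in (0:ℝ)..T,
        ((iteratedDeriv 2 u x) ^ 2 / 2 - q * (deriv u x) ^ 2 / 2 + F (u x)))
        = B / 2 - q * A / 2 + Fint := by
      rw [intervalIntegral.integral_add, intervalIntegral.integral_sub]
      · congr 1
        · congr 1
          · rw [intervalIntegral.integral_div]
          · have : ∀ x : ℝ, q * (deriv u x) ^ 2 / 2 = (q / 2) * (deriv u x) ^ 2 := by
              intro x; ring
            simp_rw [this]
            rw [intervalIntegral.integral_const_mul]; ring
      · exact ((hd2_cont.pow 2).div_const 2).intervalIntegrable 0 T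
      · exact (((continuous_const.mul (hd1_cont.pow 2))).div_const 2).intervalIntegrable 0 T
      · exact (((hd2_cont.pow 2).div_const 2).sub
          (((continuous_const.mul (hd1_cont.pow 2))).div_const 2)).intervalIntegrable 0 T
      · exact (hFcont.comp hu_cont).intervalIntegrable 0 T
    rw [h1] at hJ; linarith
  -- integration by parts
  have hparts : A = - ∫ x in (0:ℝ)..T, u x * iteratedDeriv 2 u x := by
    have hder : ∀ x ∈ Set.uIcc (0:ℝ) T, HasDerivAt (fun y => u y * deriv u y)
        ((deriv u x) ^ 2 + u x * iteratedDeriv 2 u x) x := by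
      intro x _
      have h1 : HasDerivAt u (deriv u x) x := (hu_diff x).hasDerivAt
      have h2 : HasDerivAt (deriv u) (iteratedDeriv 2 u x) x := by
        rw [h2eq]; exact (hd1_diff x).hasDerivAt
      have : HasDerivAt (fun y => u y * deriv u y)
          (deriv u x * deriv u x + u x * iteratedDeriv 2 u x) x := h1.mul h2
      convert this using 1; ring
    have hint : IntervalIntegrable
        (fun x => (deriv u x) ^ 2 + u x * iteratedDeriv 2 u x) volume 0 T :=
      ((hd1_cont.pow 2).add (hu_cont.mul hd2_cont)).intervalIntegrable 0 T
    have hftc := intervalIntegral.integral_eq_sub_of_hasDerivAt hder hint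
    rw [huT, hu0] at hftc
    rw [intervalIntegral.integral_add (f := fun x => deriv u x ^ 2) (g := fun x => u x * iteratedDeriv 2 u x) ((hd1_cont.pow 2).intervalIntegrable 0 T)
      ((hu_cont.mul hd2_cont).intervalIntegrable 0 T)] at hftc
    simp only [mul_zero, sub_zero, zero_sub, mul_comm] at hftc
    linarith [hftc]
  have hA2 : A ^ 2 ≤ C2 * B := by
    rw [hparts, neg_sq]
    exact intCS hT0 hu_cont hd2_cont
  -- Jensen
  set m := C2 / T with hm
  have hm0 : 0 ≤ m := div_nonneg hC0 hT0
  have hJen : T * H m ≤ Fint := by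
    set μ : Measure ℝ := volume.restrict (Set.Ioc 0 T) with hμ
    have hμuniv : μ Set.univ = ENNReal.ofReal T := by
      rw [hμ, Measure.restrict_apply_univ, Real.volume_Ioc, sub_zero]
    have hfin : IsFiniteMeasure μ := ⟨by rw [hμuniv]; exact ENNReal.ofReal_lt_top⟩
    have hne : NeZero μ := by
      refine ⟨fun h => ?_⟩
      rw [h] at hμuniv
      simp only [Measure.coe_zero, Pi.zero_apply] at hμuniv
      have := ENNReal.ofReal_eq_zero.1 hμuniv.symm
      linarith
    have hint1 : Integrable (fun x => (u x) ^ 2) μ := (hu_cont.pow 2).integrableOn_Ioc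
    have hint2 : Integrable ((fun t => H t) ∘ (fun x => (u x) ^ 2)) μ :=
      (hHcont.comp (hu_cont.pow 2)).integrableOn_Ioc
    have hjen := hHconv.map_average_le hHcont.continuousOn isClosed_univ
      (Filter.Eventually.of_forall fun x => Set.mem_univ _) hint1 hint2
    have havg1 : (⨍ x, (u x) ^ 2 ∂μ) = m := by
      rw [MeasureTheory.average_eq, measureReal_def, hμuniv, ENNReal.toReal_ofReal hT0, smul_eq_mul]
      have hC2' : (∫ x, (u x) ^ 2 ∂μ) = C2 := by
        rw [hCdef, intervalIntegral.integral_of_le hT0]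
      rw [hC2', hm]; ring
    rw [havg1] at hjen
    have h2 : (⨍ x, H ((u x) ^ 2) ∂μ) ≤ Fint / T := by
      rw [MeasureTheory.average_eq, measureReal_def, hμuniv, ENNReal.toReal_ofReal hT0, smul_eq_mul]
      have hle : (∫ x, H ((u x) ^ 2) ∂μ) ≤ Fint := by
        rw [hFdef, intervalIntegral.integral_of_le hT0]
        refine MeasureTheory.integral_mono hint2 ?_ (fun x => hHF (u x))
        exact (hFcont.comp hu_cont).integrableOn_Ioc
      rw [div_eq_inv_mul]
      exact mul_le_mul_of_nonneg_left hle (inv_nonneg.2 hT0)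
    have := le_trans hjen h2
    rw [le_div_iff₀ hT] at this
    linarith
  have hC2m : C2 = T * m := by rw [hm]; field_simp
  -- first conclusion
  have main1 : A ≤ q * T * s := by
    have hBle : B ≤ q * A - 2 * Fint := by linarith
    have hmles : m ≤ s := by
      rcases eq_or_lt_of_le hm0 with hm0' | hmpos
      · linarith
      · refine hs2 m hmpos ?_
        have hkey : A ^ 2 ≤ T * m * (q * A) - 2 * T * m * (T * H m) := by
          have h1 : C2 * B ≤ C2 * (q * A - 2 * Fint) :=
            mul_le_mul_of_nonneg_left hBle hC0
          have h2 : C2 * (q * A - 2 * Fint) ≤ C2 * (q * A - 2 * (T * H m)) := by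
            have := mul_le_mul_of_nonneg_left hJen (by linarith : (0:ℝ) ≤ 2 * C2)
            nlinarith
          nlinarith [hA2]
        have h6 : (0:ℝ) < 2 * T ^ 2 * m := by positivity
        have h5 : 2 * T ^ 2 * m * H m ≤ 2 * T ^ 2 * m * (q ^ 2 * m / 8) := by
          nlinarith [sq_nonneg (A - q * T * m / 2)]
        have hHmle : H m ≤ q ^ 2 * m / 8 := (mul_le_mul_iff_right₀ h6).1 h5
        rw [div_le_iff₀ hmpos]
        nlinarith [hmpos]
    rcases eq_or_lt_of_le hA0 with hA0' | hApos
    · have : 0 ≤ q * T * s := mul_nonneg (mul_nonneg hq.le hT0) hs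
      linarith
    · have hAqC : A ^ 2 ≤ C2 * (q * A) := by
        have : C2 * B ≤ C2 * (q * A) := by
          refine mul_le_mul_of_nonneg_left ?_ hC0
          linarith
        linarith [hA2]
      have : A ≤ C2 * q := by nlinarith
      calc A ≤ C2 * q := this
        _ = q * T * m := by rw [hC2m]; ring
        _ ≤ q * T * s := by
            have : 0 ≤ q * T := by positivity
            nlinarith
  refine ⟨main1, ?_⟩
  -- oscillation
  have hIcc : (Set.Icc (0:ℝ) T).Nonempty := Set.nonempty_Icc.2 hT0
  obtain ⟨bmax, hbmax, hmax⟩ := isCompact_Icc.exists_isMaxOn hIcc hu_cont.continuousOn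
  obtain ⟨amin, hamin, hmin⟩ := isCompact_Icc.exists_isMinOn hIcc hu_cont.continuousOn
  have hsup : sSup (u '' Set.Icc 0 T) = u bmax :=
    IsGreatest.csSup_eq ⟨Set.mem_image_of_mem u hbmax, by rintro v ⟨x, hx, rfl⟩; exact hmax hx⟩
  have hinf : sInf (u '' Set.Icc 0 T) = u amin :=
    IsLeast.csInf_eq ⟨Set.mem_image_of_mem u hamin, by rintro v ⟨x, hx, rfl⟩; exact hmin hx⟩
  have hosc : oscOn u T = u bmax - u amin := by rw [oscOn, hsup, hinf]
  have hseg : ∀ p r : ℝ, p ∈ Set.Icc (0:ℝ) T → r ∈ Set.Icc (0:ℝ) T → p ≤ r →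
      (u r - u p) ^ 2 ≤ T * A := by
    intro p r hp hr hpr
    have hftc : (∫ x in p..r, deriv u x) = u r - u p :=
      intervalIntegral.integral_deriv_eq_sub (fun x _ => hu_diff x)
        (hd1_cont.intervalIntegrable p r)
    have hcs := intCS hpr (continuous_const : Continuous fun _ : ℝ => (1:ℝ)) hd1_cont
    have h1 : (∫ x in p..r, (1:ℝ) * deriv u x) = u r - u p := by
      simpa using hftc
    have h2 : (∫ x in p..r, ((1:ℝ)) ^ 2) = r - p := by simp
    have h3 : (∫ x in p..r, (deriv u x) ^ 2) ≤ A := by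
      refine intervalIntegral.integral_mono_interval hp.1 hpr hr.2 ?_
        ((hd1_cont.pow 2).intervalIntegrable 0 T)
      exact MeasureTheory.ae_of_all _ (fun x => sq_nonneg _)
    have h4 : (0:ℝ) ≤ ∫ x in p..r, (deriv u x) ^ 2 :=
      intervalIntegral.integral_nonneg hpr (fun x _ => sq_nonneg _)
    rw [h1, h2] at hcs
    nlinarith [hp.1, hr.2, hpr]
  have hoscsq : (oscOn u T) ^ 2 ≤ T * A := by
    rw [hosc]
    rcases le_total amin bmax with hab | hab
    · exact hseg amin bmax hamin hbmax hab
    · have := hseg bmax amin hbmax hamin hab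
      nlinarith [this]
  calc (oscOn u T) ^ 2 ≤ T * A := hoscsq
    _ ≤ T * (q * T * s) := by nlinarith [main1, hT0]
    _ = q * T ^ 2 * s := by ring

set_option maxHeartbeats 1000000 in
/-- Let `F` be `C²` with `F(t) > F(0) = 0` for `t ≠ 0`,
`liminf_{|t|→∞} F(t)/t² > 0` and `F''(0) = 0`, and let `φ` be as above. Then there is
`q₀ > 0` such that for every `q ∈ (0, q₀]`, with `s ≥ 0` the (unique, since `φ` is
strictly increasing) value `φ⁻¹(q²/2)` of the inverse of `φ` restricted to `[0,∞)`,
every `T > 0` and every `C²` function `u` on `[0,T]` with `u'(0) = u'(T) = 0` and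
`J_q(u) ≤ 0` satisfy `∫₀ᵀ |u'|² ≤ q·T·φ⁻¹(q²/2)` and `Osc(u)² ≤ q·T²·φ⁻¹(q²/2)`. -/
theorem stmt16 (F : ℝ → ℝ) (hF : ContDiff ℝ 2 F) (hF0 : F 0 = 0)
    (hargmin : ∀ t : ℝ, t ≠ 0 → F 0 < F t)
    (hliminf : 0 < Filter.liminf (fun t : ℝ => F t / t ^ 2) (Filter.atBot ⊔ Filter.atTop))
    (hF'' : iteratedDeriv 2 F 0 = 0) :
    ∃ q₀ > (0:ℝ), ∀ q : ℝ, 0 < q → q ≤ q₀ →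
      ∃ s : ℝ, 0 ≤ s ∧ phiFun F s = q ^ 2 / 2 ∧
        ∀ T : ℝ, 0 < T →
          ∀ u : ℝ → ℝ, ContDiff ℝ 2 u → deriv u 0 = 0 → deriv u T = 0 →
            (∫ x in (0:ℝ)..T,
              ((iteratedDeriv 2 u x) ^ 2 / 2 - q * (deriv u x) ^ 2 / 2 + F (u x))) ≤ 0 →
            (∫ x in (0:ℝ)..T, (deriv u x) ^ 2) ≤ q * T * s ∧
            (oscOn u T) ^ 2 ≤ q * T ^ 2 * s := by
  obtain ⟨c, hc0, R, hR1, hcR⟩ := liminf_extract F hliminf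
  set G : ℝ → ℝ := fun t => Ftilde F (Real.sqrt |t|) with hGdef
  have hFnonneg : ∀ t, 0 ≤ F t := fun t => by
    rcases eq_or_ne t 0 with rfl | h
    · exact hF0.ge
    · exact le_of_lt (hF0 ▸ hargmin t h)
  have hGnonneg : ∀ y, 0 ≤ G y := fun y => le_min (hFnonneg _) (hFnonneg _)
  set H := Hfun F with hHdef
  have hHG : H = convexEnvelope G := rfl
  have hHnonneg : ∀ t, 0 ≤ H t := fun t => env_nonneg hGnonneg t
  have hHle : ∀ t, H t ≤ G t := fun t => env_le hGnonneg t
  have hHconv : ConvexOn ℝ Set.univ H := env_convexOn hGnonneg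
  have hHcont : Continuous H := env_continuous hGnonneg
  have hG0 : G 0 = 0 := by
    simp [hGdef, Ftilde, hF0]
  have hH0 : H 0 = 0 := le_antisymm ((hHle 0).trans (le_of_eq hG0)) (hHnonneg 0)
  -- pointwise comparison H(t²) ≤ F(t)
  have hHF : ∀ t : ℝ, H (t ^ 2) ≤ F t := by
    intro t
    have h1 : H (t ^ 2) ≤ G (t ^ 2) := hHle _
    have h2 : G (t ^ 2) = min (F |t|) (F (-|t|)) := by
      rw [hGdef]
      simp only []
      rw [abs_of_nonneg (sq_nonneg t), Real.sqrt_sq_eq_abs]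
      rfl
    rw [h2] at h1
    rcases abs_cases t with ⟨habs, _⟩ | ⟨habs, _⟩
    · have h3 := h1.trans (min_le_left _ _)
      rwa [habs] at h3
    · have h3 := h1.trans (min_le_right _ _)
      rw [habs, neg_neg] at h3
      exact h3
  -- lower bound for H
  have hHlow : ∀ t : ℝ, 0 ≤ t → c * t - c * R ^ 2 ≤ H t := by
    intro t ht
    have hg : ∀ y : ℝ, c * |y| - c * R ^ 2 ≤ G y := by
      intro y
      rcases le_or_gt (|y|) (R ^ 2) with h | h
      · have h0 : c * |y| - c * R ^ 2 ≤ 0 := by nlinarith [hc0.le]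
        linarith [hGnonneg y]
      · have hsy : R ≤ Real.sqrt |y| := by
          rw [show R = Real.sqrt (R ^ 2) from (Real.sqrt_sq (by linarith : (0:ℝ) ≤ R)).symm]
          exact Real.sqrt_le_sqrt h.le
        have h1 := hcR (Real.sqrt |y|) hsy
        have hsq : (Real.sqrt |y|) ^ 2 = |y| := Real.sq_sqrt (abs_nonneg y)
        have hGy : c * |y| ≤ G y := by
          rw [hGdef]
          refine le_min ?_ ?_
          · have := h1.1; rw [hsq] at this; exact this
          · have := h1.2; rw [hsq] at this; exact this
        nlinarith [hc0.le]
    have := le_env (convexOn_linabs c (c * R ^ 2) hc0.le) hg t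
    rw [abs_of_nonneg ht] at this
    exact this
  refine ⟨Real.sqrt (c / 2), Real.sqrt_pos.2 (by linarith), ?_⟩
  intro q hq hqle
  have hq2 : q ^ 2 ≤ c / 2 := by
    have h1 : q ^ 2 ≤ (Real.sqrt (c / 2)) ^ 2 := by
      have := pow_le_pow_left₀ hq.le hqle 2
      exact this
    rwa [Real.sq_sqrt (by linarith : (0:ℝ) ≤ c / 2)] at h1
  -- the sublevel set
  set S := {t : ℝ | 0 ≤ t ∧ phiFun F t ≤ q ^ 2 / 2} with hSdef
  have h0S : (0:ℝ) ∈ S := by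
    refine ⟨le_rfl, ?_⟩
    rw [phiFun, if_pos rfl]
    positivity
  have hSbdd : BddAbove S := by
    refine ⟨2 * R ^ 2, fun t ht => ?_⟩
    rcases eq_or_lt_of_le ht.1 with h | htpos
    · nlinarith [hR1]
    · have hφt : phiFun F t = H t / t := by rw [phiFun, if_neg (ne_of_gt htpos)]
      have h1 : H t / t ≤ q ^ 2 / 2 := hφt ▸ ht.2
      rw [div_le_iff₀ htpos] at h1
      have h2 := hHlow t htpos.le
      nlinarith [hc0]
  set s := sSup S with hsdef
  have hs0 : 0 ≤ s := le_csSup hSbdd h0S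
  have hspos : 0 < s := by
    obtain ⟨τ, hτ0, hτ⟩ := small_t F hF hF0 hargmin hF'' (q ^ 2 / 2) (by positivity)
    have hmem : τ ^ 2 ∈ S := by
      refine ⟨sq_nonneg τ, ?_⟩
      have hτsq : (0:ℝ) < τ ^ 2 := by positivity
      rw [phiFun, if_neg (ne_of_gt hτsq)]
      rw [div_le_iff₀ hτsq]
      calc Hfun F (τ ^ 2) = H (τ ^ 2) := rfl
        _ ≤ F τ := hHF τ
        _ ≤ q ^ 2 / 2 * τ ^ 2 := hτ
    have := le_csSup hSbdd hmem
    nlinarith [this, sq_nonneg τ, hτ0]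
  have hcontφ : ContinuousAt (phiFun F) s := by
    have hbase : ContinuousAt (fun t => H t / t) s :=
      hHcont.continuousAt.div continuousAt_id (ne_of_gt hspos)
    refine hbase.congr ?_
    have hmem : Set.Ioi (0:ℝ) ∈ nhds s := isOpen_Ioi.mem_nhds hspos
    exact Filter.eventuallyEq_of_mem hmem (fun t ht => by
      rw [phiFun, if_neg (ne_of_gt ht)])
  have hφs : phiFun F s = q ^ 2 / 2 := by
    refine le_antisymm ?_ ?_
    · by_contra hcon
      push_neg at hcon
      have hnb : {y : ℝ | q ^ 2 / 2 < y} ∈ nhds (phiFun F s) := isOpen_lt' _ |>.mem_nhds hcon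
      have := hcontφ hnb
      obtain ⟨δ, hδ0, hball⟩ := Metric.mem_nhds_iff.1 this
      obtain ⟨t, htS, htgt⟩ := exists_lt_of_lt_csSup ⟨0, h0S⟩
        (show s - δ / 2 < sSup S by rw [← hsdef]; linarith)
      have htle : t ≤ s := le_csSup hSbdd htS
      have htball : t ∈ Metric.ball s δ := by
        rw [Metric.mem_ball, Real.dist_eq, abs_of_nonpos (by linarith)]
        linarith
      have := hball htball
      exact absurd htS.2 (not_le.2 this)
    · by_contra hcon
      push_neg at hcon
      have hnb : {y : ℝ | y < q ^ 2 / 2} ∈ nhds (phiFun F s) := isOpen_gt' _ |>.mem_nhds hcon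
      have := hcontφ hnb
      obtain ⟨δ, hδ0, hball⟩ := Metric.mem_nhds_iff.1 this
      have htball : s + δ / 2 ∈ Metric.ball s δ := by
        rw [Metric.mem_ball, Real.dist_eq, abs_of_nonneg (by linarith)]
        linarith
      have hφlt := hball htball
      have hmem : s + δ / 2 ∈ S := ⟨by linarith, le_of_lt hφlt⟩
      have := le_csSup hSbdd hmem
      linarith
  refine ⟨s, hs0, hφs, ?_⟩
  intro T hT u hu hu0 huT hJ
  have hs2 : ∀ t : ℝ, 0 < t → H t / t ≤ q ^ 2 / 2 → t ≤ s := by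
    intro t ht hle
    refine le_csSup hSbdd ⟨ht.le, ?_⟩
    rw [phiFun, if_neg (ne_of_gt ht)]
    exact hle
  exact keyEstimate F H q T s hq hT hs0 hHconv hHcont hHnonneg hHF hFnonneg
    hF.continuous hs2 u hu hu0 huT hJ
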